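/- Let m ≥ 1, let O ⊆ ℝ^m be a nonempty open convex set, and let f : O → ℝ be convex. Then f is lower-C² at every point of O; that is, for every x̄ ∈ O there exist an open neighbourhood V of x̄ with V ⊆ O, a compact topological space T, and a family of functions (f_t)_{t∈T} forming a lower-C² representation of f on V. -/

import Mathlib

open scoped RealInnerProductSpace

/-- `(ft t)_{t ∈ T}` is a lower-C² representation of `f` on the set `V`: each `ft t`
is C² on `V`, the values, gradients and Hessians depend continuously on
`(t, x) ∈ T × V`, and `f = max_{t ∈ T} ft t` on `V` (the maximum being attained). -/
def IsLowerC2Rep {m : ℕ} (T : Type) [TopologicalSpace T]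
    (f : EuclideanSpace ℝ (Fin m) → ℝ)
    (ft : T → EuclideanSpace ℝ (Fin m) → ℝ)
    (V : Set (EuclideanSpace ℝ (Fin m))) : Prop :=
  (∀ t : T, ContDiffOn ℝ 2 (ft t) V) ∧
  ContinuousOn (fun p : T × EuclideanSpace ℝ (Fin m) => ft p.1 p.2)
    (Set.univ ×ˢ V) ∧
  ContinuousOn (fun p : T × EuclideanSpace ℝ (Fin m) => gradient (ft p.1) p.2)
    (Set.univ ×ˢ V) ∧
  ContinuousOn
    (fun p : T × EuclideanSpace ℝ (Fin m) => fderiv ℝ (gradient (ft p.1)) p.2)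
    (Set.univ ×ˢ V) ∧
  (∀ x ∈ V, (∀ t : T, ft t x ≤ f x) ∧ (∃ t : T, ft t x = f x))

lemma exists_subgradient {E : Type*} [NormedAddCommGroup E] [InnerProductSpace ℝ E]
    [CompleteSpace E] {O : Set E} (hOopen : IsOpen O) {f : E → ℝ}
    (hf : ConvexOn ℝ O f) (hcont : ContinuousOn f O) {x : E} (hx : x ∈ O) :
    ∃ g : E, ∀ y ∈ O, f x + ⟪g, y - x⟫ ≤ f y := by
  set S : Set (E × ℝ) := {p | p.1 ∈ O ∧ f p.1 < p.2} with hS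
  have hSopen : IsOpen S := by
    have : S = (O ×ˢ (Set.univ : Set ℝ)) ∩ (fun p : E × ℝ => p.2 - f p.1) ⁻¹' Set.Ioi 0 := by
      ext p; simp [hS, sub_pos, and_comm]
    rw [this]
    refine ContinuousOn.isOpen_inter_preimage ?_ (hOopen.prod isOpen_univ) isOpen_Ioi
    exact continuous_snd.continuousOn.sub
      (hcont.comp continuous_fst.continuousOn (fun p hp => hp.1))
  have hSconv : Convex ℝ S := by
    rintro ⟨y₁, z₁⟩ ⟨hy₁, hz₁⟩ ⟨y₂, z₂⟩ ⟨hy₂, hz₂⟩ a b ha hb hab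
    constructor
    · exact hf.1 hy₁ hy₂ ha hb hab
    · calc f (a • y₁ + b • y₂) ≤ a * f y₁ + b * f y₂ := hf.2 hy₁ hy₂ ha hb hab
        _ < a * z₁ + b * z₂ := by
          rcases ha.lt_or_eq with ha' | ha'
          · have h1 : a * f y₁ < a * z₁ := by nlinarith
            have h2 : b * f y₂ ≤ b * z₂ := by nlinarith
            linarith
          · have hb' : 0 < b := by simp [← ha'] at hab; linarith
            have h1 : b * f y₂ < b * z₂ := by nlinarith
            have h2 : a * f y₁ ≤ a * z₁ := by nlinarith
            linarith
  have hxS : (x, f x) ∉ S := fun h => lt_irrefl _ h.2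
  obtain ⟨L, hL⟩ := geometric_hahn_banach_open_point hSconv hSopen hxS
  set c : ℝ := L (0, 1) with hc
  have hLsplit : ∀ (y : E) (z : ℝ), L (y, z) = L (y, 0) + z * c := by
    intro y z
    have : (y, z) = (y, (0:ℝ)) + z • ((0:E), (1:ℝ)) := by simp [Prod.ext_iff]
    rw [this, map_add, map_smul]; simp [hc, smul_eq_mul]
  have hcneg : c < 0 := by
    have h1 := hL (x, f x + 1) ⟨hx, by dsimp only; linarith⟩
    have h1' : L (x, 0) + (f x + 1) * c < L (x, 0) + f x * c := by
      rw [← hLsplit, ← hLsplit]; exact h1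
    nlinarith
  have key : ∀ y ∈ O, L (y, 0) + f y * c ≤ L (x, 0) + f x * c := by
    intro y hy
    by_contra h
    push_neg at h
    set A := L (y, 0) + f y * c
    set B := L (x, 0) + f x * c
    have hε : (0:ℝ) < (A - B) / (-2 * c) := by
      apply div_pos (by linarith) (by linarith)
    have h2 := hL (y, f y + (A - B) / (-2 * c)) ⟨hy, by dsimp only; linarith⟩
    have h2' : L (y, 0) + (f y + (A - B) / (-2 * c)) * c < L (x, 0) + f x * c := by
      rw [← hLsplit, ← hLsplit]; exact h2
    have hc0 : c ≠ 0 := ne_of_lt hcneg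
    have hq : (A - B) / (-2 * c) * c = -(A - B) / 2 := by field_simp
    nlinarith [h2', hq]
  refine ⟨(-(1/c)) • (InnerProductSpace.toDual ℝ E).symm
    (L.comp (ContinuousLinearMap.inl ℝ E ℝ)), fun y hy => ?_⟩
  have hinner : ∀ v : E,
      ⟪(-(1/c)) • (InnerProductSpace.toDual ℝ E).symm (L.comp (ContinuousLinearMap.inl ℝ E ℝ)), v⟫
        = -(1/c) * L (v, 0) := by
    intro v
    rw [real_inner_smul_left, InnerProductSpace.toDual_symm_apply]
    simp [ContinuousLinearMap.inl]
  rw [hinner]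
  have hkey := key y hy
  have hL' : L (y - x, 0) = L (y, 0) - L (x, 0) := by
    have : ((y - x, (0:ℝ)) : E × ℝ) = (y, 0) - (x, 0) := by simp [Prod.ext_iff]
    rw [this, map_sub]
  have hc0 : c ≠ 0 := ne_of_lt hcneg
  rw [hL']
  have hpos : (0:ℝ) < -(1/c) := neg_pos.mpr (one_div_neg.mpr hcneg)
  have h3 : L (y,0) - L (x,0) ≤ (f x - f y) * c := by nlinarith [hkey]
  have h4 : -(1/c) * (L (y,0) - L (x,0)) ≤ -(1/c) * ((f x - f y) * c) :=
    mul_le_mul_of_nonneg_left h3 hpos.le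
  have h5 : -(1/c) * ((f x - f y) * c) = f y - f x := by field_simp; ring
  linarith

theorem convex_is_lowerC2 {m : ℕ} (hm : 1 ≤ m)
    (O : Set (EuclideanSpace ℝ (Fin m))) (hOne : O.Nonempty) (hOopen : IsOpen O)
    (hOconv : Convex ℝ O)
    (f : EuclideanSpace ℝ (Fin m) → ℝ) (hf : ConvexOn ℝ O f) :
    ∀ xbar ∈ O, ∃ V : Set (EuclideanSpace ℝ (Fin m)),
      IsOpen V ∧ xbar ∈ V ∧ V ⊆ O ∧
      ∃ (T : Type) (instT : TopologicalSpace T),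
        @CompactSpace T instT ∧
        ∃ ft : T → EuclideanSpace ℝ (Fin m) → ℝ,
          @IsLowerC2Rep m T instT f ft V := by
  intro xbar hxbar
  obtain ⟨r, hr, hKO⟩ : ∃ r > 0, Metric.closedBall xbar r ⊆ O := by
    obtain ⟨ε, hε, h⟩ := Metric.isOpen_iff.1 hOopen xbar hxbar
    exact ⟨ε / 2, by linarith, (Metric.closedBall_subset_ball (by linarith)).trans h⟩
  set K := Metric.closedBall xbar r with hK
  have hKcomp : IsCompact K := isCompact_closedBall _ _
  have hfc : ContinuousOn f O := hf.continuousOn hOopen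
  obtain ⟨M, hM⟩ := hKcomp.exists_bound_of_continuousOn (hfc.mono hKO)
  have hM0 : 0 ≤ M := le_trans (norm_nonneg _) (hM xbar (Metric.mem_closedBall_self hr.le))
  set C := 4 * M / r with hC
  have hC0 : 0 ≤ C := by positivity
  set D := M + C * (‖xbar‖ + r) with hD
  set V := Metric.ball xbar (r / 4) with hV
  have hVK : V ⊆ K :=
    Metric.ball_subset_closedBall.trans (Metric.closedBall_subset_closedBall (by linarith))
  have hVO : V ⊆ O := hVK.trans hKO
  refine ⟨V, Metric.isOpen_ball, Metric.mem_ball_self (by linarith), hVO, ?_⟩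
  set Tset : Set (EuclideanSpace ℝ (Fin m) × ℝ) :=
    {p | ‖p.1‖ ≤ C ∧ |p.2| ≤ D ∧ ∀ y ∈ K, ⟪p.1, y⟫ + p.2 ≤ f y} with hTset
  have hTclosed : IsClosed Tset := by
    rw [hTset, Set.setOf_and, Set.setOf_and]
    refine IsClosed.inter (isClosed_le continuous_fst.norm continuous_const)
      (IsClosed.inter (isClosed_le continuous_snd.abs continuous_const) ?_)
    have hEq : {p : EuclideanSpace ℝ (Fin m) × ℝ | ∀ y ∈ K, ⟪p.1, y⟫ + p.2 ≤ f y} =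
        ⋂ y ∈ K, {p : EuclideanSpace ℝ (Fin m) × ℝ | ⟪p.1, y⟫ + p.2 ≤ f y} := by
      ext p; simp
    rw [hEq]
    exact isClosed_biInter fun y _ => isClosed_le
      ((continuous_fst.inner continuous_const).add continuous_snd) continuous_const
  have hTbdd : Bornology.IsBounded Tset := by
    refine (Bornology.IsBounded.prod (Metric.isBounded_closedBall (x := (0 : EuclideanSpace ℝ (Fin m))) (r := C))
      (Metric.isBounded_closedBall (x := (0:ℝ)) (r := D))).subset ?_
    rintro ⟨a, b⟩ ⟨h1, h2, _⟩
    exact ⟨mem_closedBall_zero_iff.2 h1, mem_closedBall_zero_iff.2 (by rwa [Real.norm_eq_abs])⟩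
  have hTcomp : IsCompact Tset := Metric.isCompact_of_isClosed_isBounded hTclosed hTbdd
  refine ⟨Tset, inferInstance, isCompact_iff_compactSpace.mp hTcomp,
    fun t x => ⟪t.val.1, x⟫ + t.val.2, ?_, ?_, ?_, ?_, ?_⟩
  · intro t
    exact (((contDiff_const (c := t.val.1)).inner ℝ contDiff_id).add contDiff_const).contDiffOn
  · exact (((continuous_subtype_val.comp continuous_fst).fst.inner continuous_snd).add
      (continuous_subtype_val.comp continuous_fst).snd).continuousOn
  · have hgrad : ∀ (t : Tset) (x : EuclideanSpace ℝ (Fin m)),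
        gradient (fun x => ⟪t.val.1, x⟫ + t.val.2) x = t.val.1 := by
      intro t x
      apply HasGradientAt.gradient
      rw [hasGradientAt_iff_hasFDerivAt]
      have h := (((InnerProductSpace.toDual ℝ (EuclideanSpace ℝ (Fin m))) t.val.1).hasFDerivAt
        (x := x)).add_const t.val.2
      simpa only [InnerProductSpace.toDual_apply_apply] using h
    have : (fun p : Tset × EuclideanSpace ℝ (Fin m) =>
        gradient (fun x => ⟪p.1.val.1, x⟫ + p.1.val.2) p.2) = fun p => p.1.val.1 := by
      funext p; exact hgrad p.1 p.2
    rw [this]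
    exact (continuous_subtype_val.comp continuous_fst).fst.continuousOn
  · have hgrad : ∀ (t : Tset) (x : EuclideanSpace ℝ (Fin m)),
        gradient (fun x => ⟪t.val.1, x⟫ + t.val.2) x = t.val.1 := by
      intro t x
      apply HasGradientAt.gradient
      rw [hasGradientAt_iff_hasFDerivAt]
      have h := (((InnerProductSpace.toDual ℝ (EuclideanSpace ℝ (Fin m))) t.val.1).hasFDerivAt
        (x := x)).add_const t.val.2
      simpa only [InnerProductSpace.toDual_apply_apply] using h
    have : (fun p : Tset × EuclideanSpace ℝ (Fin m) =>
        fderiv ℝ (gradient (fun x => ⟪p.1.val.1, x⟫ + p.1.val.2)) p.2) = fun _ => 0 := by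
      funext p
      have h1 : gradient (fun x => ⟪p.1.val.1, x⟫ + p.1.val.2) = fun _ => p.1.val.1 :=
        funext (hgrad p.1)
      rw [h1]
      exact fderiv_const_apply _
    rw [this]
    exact continuousOn_const
  · intro x hx
    constructor
    · intro t; exact le_of_eq_of_le (by ring) (t.prop.2.2 x (hVK hx))
    · obtain ⟨g, hg⟩ := exists_subgradient hOopen hf hfc (hVO hx)
      have hxK : x ∈ K := hVK hx
      have hxn : ‖x - xbar‖ < r / 4 := by
        rw [hV, Metric.mem_ball, dist_eq_norm] at hx; exact hx
      have hmem3 : ∀ y ∈ K, ⟪g, y⟫ + (f x - ⟪g, x⟫) ≤ f y := by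
        intro y hy
        have h := hg y (hKO hy)
        rw [inner_sub_right] at h
        linarith
      have hfxM : |f x| ≤ M := by have := hM x hxK; rwa [Real.norm_eq_abs] at this
      have hgC : ‖g‖ ≤ C := by
        rcases eq_or_ne g 0 with h0 | h0
        · rw [h0, norm_zero]; exact hC0
        · set u := ‖g‖⁻¹ • g with hu'
          have hgn : ‖g‖ ≠ 0 := norm_ne_zero_iff.2 h0
          have hu : ‖u‖ = 1 := by
            rw [hu', norm_smul, norm_inv, norm_norm, inv_mul_cancel₀ hgn]
          set y := x + (r / 2) • u with hy'
          have hyK : y ∈ K := by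
            rw [hK, Metric.mem_closedBall, dist_eq_norm]
            have he : y - xbar = (x - xbar) + (r / 2) • u := by rw [hy']; abel
            rw [he]
            have := norm_add_le (x - xbar) ((r / 2) • u)
            rw [norm_smul, hu, Real.norm_eq_abs, abs_of_pos (by linarith : (0:ℝ) < r/2)] at this
            linarith
          have h1 := hg y (hKO hyK)
          have h2 : ⟪g, y - x⟫ = (r / 2) * ‖g‖ := by
            have he : y - x = (r / 2) • u := by rw [hy']; abel
            rw [he, real_inner_smul_right, hu', real_inner_smul_right,
              real_inner_self_eq_norm_sq]
            field_simp
          have hfyM : |f y| ≤ M := by have := hM y hyK; rwa [Real.norm_eq_abs] at this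
          rw [hC, le_div_iff₀ hr]
          have hfx' : -M ≤ f x := neg_le_of_abs_le hfxM
          have hfy' : f y ≤ M := le_of_abs_le hfyM
          nlinarith
      have hbD : |f x - ⟪g, x⟫| ≤ D := by
        have hxnorm : ‖x‖ ≤ ‖xbar‖ + r := by
          have h := norm_sub_norm_le x xbar
          linarith [hxn, hr]
        have h5 : |⟪g, x⟫| ≤ C * (‖xbar‖ + r) :=
          (abs_real_inner_le_norm g x).trans
            (mul_le_mul hgC hxnorm (norm_nonneg _) hC0)
        calc |f x - ⟪g, x⟫| ≤ |f x| + |⟪g, x⟫| := abs_sub _ _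
          _ ≤ M + C * (‖xbar‖ + r) := add_le_add hfxM h5
      exact ⟨⟨(g, f x - ⟪g, x⟫), hgC, hbD, hmem3⟩, by ring⟩
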